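/- arXiv:1209.6279 — 4 statements merged into one kernel-verified Lean document; each statement's English description precedes it below -/
import Mathlib

section
/- Let A be a local Noetherian k-algebra with residue field k, and let M be a finitely generated A-module. If for every ideal I ⊂ A with A/I of finite k-dimension n one has dim_k(M ⊗_A A/I) = n · dim_k(M ⊗_A k), then M is a free A-module. -/
open IsLocalRing Module

theorem aux_finite_k {k A : Type*} [Field k] [CommRing A] [Algebra k A] [IsLocalRing A]
    {N : Type*} [AddCommGroup N] [Module A N] [Module k N] [IsScalarTower k A N]
    (hres : Function.Surjective (algebraMap k (ResidueField A)))
    (hann : ∀ a ∈ maximalIdeal A, ∀ x : N, a • x = 0) [Module.Finite A N] :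
    Module.Finite k N := by
  obtain ⟨s, hs⟩ := Module.Finite.fg_top (R := A) (M := N)
  refine ⟨⟨s, ?_⟩⟩
  rw [eq_top_iff]
  intro x _
  have hx : x ∈ Submodule.span A (s : Set N) := by rw [hs]; trivial
  refine Submodule.span_induction (fun y hy => Submodule.subset_span hy)
    (Submodule.zero_mem _) (fun y z _ _ hy hz => Submodule.add_mem _ hy hz)
    (fun a y _ hy => ?_) hx
  obtain ⟨c, hc⟩ := hres (residue A a)
  have hmem : a - algebraMap k A c ∈ maximalIdeal A := by
    have h0 : residue A (a - algebraMap k A c) = 0 := by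
      rw [map_sub, sub_eq_zero, ← hc]
      rfl
    rwa [← Ideal.Quotient.eq_zero_iff_mem]
  have hay : a • y = c • y := by
    have h1 := hann _ hmem y
    rw [sub_smul, sub_eq_zero] at h1
    rw [h1, algebraMap_smul]
  exact hay ▸ Submodule.smul_mem _ c hy

theorem aux_findim_pow {k A : Type*} [Field k] [CommRing A] [Algebra k A] [IsLocalRing A]
    [IsNoetherianRing A]
    (hres : Function.Surjective (algebraMap k (ResidueField A))) (t : ℕ) :
    FiniteDimensional k (A ⧸ (maximalIdeal A ^ t)) := by
  induction t with
  | zero =>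
      rw [pow_zero, Ideal.one_eq_top]
      have : Subsingleton (A ⧸ (⊤ : Ideal A)) :=
        Submodule.Quotient.subsingleton_iff.mpr rfl
      exact Module.Finite.of_surjective (0 : k →ₗ[k] _) (fun y => ⟨0, Subsingleton.elim _ _⟩)
  | succ t ih =>
      set I : Ideal A := maximalIdeal A ^ (t + 1) with hI
      set J : Ideal A := maximalIdeal A ^ t with hJ
      have hIJ : I ≤ J := Ideal.pow_le_pow_right (Nat.le_succ t)
      set S : Submodule A (A ⧸ I) := Submodule.map (Submodule.mkQ I) J with hS
      have hannS : ∀ a ∈ maximalIdeal A, ∀ x : S, a • x = 0 := by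
        rintro a ha ⟨y, hy⟩
        obtain ⟨z, hz, rfl⟩ := hy
        refine Subtype.ext ?_
        show a • Submodule.mkQ I z = 0
        rw [← map_smul, Submodule.mkQ_apply, Submodule.Quotient.mk_eq_zero]
        have hz2 : a • z = a * z := rfl
        rw [hz2, hI, pow_succ, mul_comm]
        exact Ideal.mul_mem_mul ha hz
      have hfinS : Module.Finite A S := Module.Finite.iff_fg.mpr (IsNoetherian.noetherian S)
      have h1 : Module.Finite k S := aux_finite_k hres hannS
      have e : ((A ⧸ I) ⧸ S) ≃ₗ[A] A ⧸ J :=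
        Submodule.quotientQuotientEquivQuotient I J hIJ
      have h2 : Module.Finite k ((A ⧸ I) ⧸ S) :=
        Module.Finite.equiv (e.restrictScalars k).symm
      have h2' : Module.Finite k ((A ⧸ I) ⧸ (S.restrictScalars k)) :=
        Module.Finite.equiv (Submodule.Quotient.restrictScalarsEquiv k S).symm
      have h1' : Module.Finite k (S.restrictScalars k) :=
        Module.Finite.equiv ((Submodule.restrictScalarsEquiv k A (A ⧸ I) S).restrictScalars k).symm
      have hrank : Module.rank k (A ⧸ I) < Cardinal.aleph0 := by
        rw [← Submodule.rank_quotient_add_rank (S.restrictScalars k)]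
        exact Cardinal.add_lt_aleph0 (Module.rank_lt_aleph0 _ _) (Module.rank_lt_aleph0 _ _)
      exact Module.rank_lt_aleph0_iff.mp hrank

theorem aux_smul_top_pi {A : Type*} [CommRing A] (I : Ideal A) (d : ℕ) :
    (I • ⊤ : Submodule A (Fin d → A)) =
      Submodule.pi Set.univ (fun _ : Fin d => (I : Submodule A A)) := by
  apply le_antisymm
  · rw [Submodule.smul_le]
    intro r hr n _
    rw [Submodule.mem_pi]
    intro i _
    exact Ideal.mul_mem_right _ _ hr
  · intro x hx
    rw [Submodule.mem_pi] at hx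
    have hx2 : x = ∑ i, (x i) • (Pi.single i (1 : A) : Fin d → A) := by
      rw [← Finset.univ_sum_single x]
      refine Finset.sum_congr rfl fun i _ => ?_
      ext j
      by_cases h : i = j <;> simp [Pi.single_apply, h]
    rw [hx2]
    exact Submodule.sum_mem _ fun i _ =>
      Submodule.smul_mem_smul (hx i trivial) Submodule.mem_top

theorem aux_finrank_pi {k A : Type*} [Field k] [CommRing A] [Algebra k A] (I : Ideal A) (d : ℕ)
    [FiniteDimensional k (A ⧸ I)] :
    finrank k ((Fin d → A) ⧸ (I • ⊤ : Submodule A (Fin d → A))) = d * finrank k (A ⧸ I) := by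
  rw [aux_smul_top_pi]
  have e := Submodule.quotientPi (fun _ : Fin d => (I : Submodule A A))
  rw [LinearEquiv.finrank_eq (e.restrictScalars k), Module.finrank_pi_fintype,
    Finset.sum_const, Finset.card_univ, Fintype.card_fin, smul_eq_mul]


/-- If for every ideal `I ⊂ A` of finite colength `n = dim_k (A ⧸ I)` one has
`dim_k (M ⊗_A A/I) = n * dim_k (M ⊗_A k)` (with `M ⊗_A A/I` realized as `M ⧸ IM`
and `M ⊗_A k` as `M ⧸ 𝔪M`), then the finitely generated module `M` over the local
Noetherian `k`-algebra `A` with residue field `k` is free. -/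
theorem flatness_criterion_all_ideals {k A M : Type*} [Field k] [CommRing A] [Algebra k A]
    [IsLocalRing A] [IsNoetherianRing A]
    [AddCommGroup M] [Module A M] [Module k M] [IsScalarTower k A M] [Module.Finite A M]
    (hres : Function.Bijective (algebraMap k (ResidueField A)))
    (H : ∀ I : Ideal A, FiniteDimensional k (A ⧸ I) →
      finrank k (M ⧸ (I • ⊤ : Submodule A M)) =
        finrank k (A ⧸ I) *
          finrank k (M ⧸ ((maximalIdeal A) • ⊤ : Submodule A M))) :
    Module.Free A M := by
  classical
  have hsur := hres.surjective
  have hannM : ∀ a ∈ maximalIdeal A,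
      ∀ x : (M ⧸ (maximalIdeal A • ⊤ : Submodule A M)), a • x = 0 := by
    intro a ha x
    obtain ⟨y, rfl⟩ := Submodule.Quotient.mk_surjective _ x
    rw [← Submodule.Quotient.mk_smul, Submodule.Quotient.mk_eq_zero]
    exact Submodule.smul_mem_smul ha Submodule.mem_top
  haveI hfd : FiniteDimensional k (M ⧸ (maximalIdeal A • ⊤ : Submodule A M)) :=
    aux_finite_k hsur hannM
  set d := finrank k (M ⧸ (maximalIdeal A • ⊤ : Submodule A M)) with hd
  let b : Basis (Fin d) k (M ⧸ (maximalIdeal A • ⊤ : Submodule A M)) := Module.finBasis k _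
  choose x hx using fun i => Submodule.Quotient.mk_surjective
      ((maximalIdeal A) • ⊤ : Submodule A M) (b i)
  let π : (Fin d → A) →ₗ[A] M := Fintype.linearCombination A x
  have hπsur : Function.Surjective π := by
    rw [← LinearMap.range_eq_top, Fintype.range_linearCombination]
    rw [← IsLocalRing.map_mkQ_eq_top, Submodule.map_span, ← Set.range_comp]
    have himg : (Submodule.mkQ ((maximalIdeal A) • ⊤ : Submodule A M)) ∘ x = fun i => b i :=
      funext fun i => hx i
    rw [himg]
    rw [← Submodule.restrictScalars_eq_top_iff (S := k), eq_top_iff, ← b.span_eq]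
    exact Submodule.span_le_restrictScalars k A _
  have hker : ∀ t : ℕ, LinearMap.ker π ≤ ((maximalIdeal A ^ t) • ⊤ : Submodule A (Fin d → A)) := by
    intro t
    set I : Ideal A := maximalIdeal A ^ t with hI
    haveI hAI : FiniteDimensional k (A ⧸ I) := aux_findim_pow hsur t
    have hcomap : (I • ⊤ : Submodule A (Fin d → A)) ≤ (I • ⊤ : Submodule A M).comap π := by
      rw [← Submodule.map_le_iff_le_comap, Submodule.map_smul'']
      exact Submodule.smul_mono le_rfl le_top
    set ψ := Submodule.mapQ (I • ⊤ : Submodule A (Fin d → A)) (I • ⊤ : Submodule A M) π hcomap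
      with hψ
    have hψsur : Function.Surjective ψ := by
      intro z
      obtain ⟨m, rfl⟩ := Submodule.Quotient.mk_surjective _ z
      obtain ⟨u, rfl⟩ := hπsur m
      exact ⟨Submodule.Quotient.mk u, by rw [hψ, Submodule.mapQ_apply]⟩
    haveI hfd1 : FiniteDimensional k ((Fin d → A) ⧸ (I • ⊤ : Submodule A (Fin d → A))) := by
      rw [aux_smul_top_pi]
      exact Module.Finite.equiv
        ((Submodule.quotientPi (fun _ : Fin d => (I : Submodule A A))).restrictScalars k).symm
    haveI hfd2 : FiniteDimensional k (M ⧸ (I • ⊤ : Submodule A M)) :=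
      Module.Finite.of_surjective (ψ.restrictScalars k) hψsur
    have hfr : finrank k ((Fin d → A) ⧸ (I • ⊤ : Submodule A (Fin d → A)))
        = finrank k (M ⧸ (I • ⊤ : Submodule A M)) := by
      rw [aux_finrank_pi, H I hAI, mul_comm]
    have hψinj : Function.Injective (ψ.restrictScalars k) :=
      (LinearMap.injective_iff_surjective_of_finrank_eq_finrank hfr).mpr hψsur
    intro y hy
    have h1 : ψ (Submodule.Quotient.mk y) = 0 := by
      rw [hψ, Submodule.mapQ_apply, LinearMap.mem_ker.mp hy, Submodule.Quotient.mk_zero]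
    have h0 : (Submodule.Quotient.mk y : (Fin d → A) ⧸ (I • ⊤ : Submodule A (Fin d → A))) = 0 :=
      hψinj (by simpa using h1)
    rwa [Submodule.Quotient.mk_eq_zero] at h0
  have hbot : LinearMap.ker π = ⊥ := by
    rw [eq_bot_iff]
    refine le_trans (le_iInf hker) ?_
    rw [Ideal.iInf_pow_smul_eq_bot_of_isLocalRing (I := maximalIdeal A) (M := Fin d → A)
      (IsLocalRing.maximalIdeal.isMaximal A).ne_top]
  have hbij : Function.Bijective π := ⟨LinearMap.ker_eq_bot.mp hbot, hπsur⟩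
  exact Module.Free.of_equiv (LinearEquiv.ofBijective π hbij)
end

section
/- Let A be a local Noetherian k-algebra with maximal ideal 𝔪 and residue field k, M a finitely generated A-module, and I ⊂ A an ideal with dim_k(A/I) = n. If dim_k(M ⊗_A A/I) = n · dim_k(M ⊗_A k), then Tor₁^{A/I}(M/IM, k) = 0, i.e., M/IM is a flat A/I-module. -/
open IsLocalRing Module CategoryTheory

lemma aux_flat_tor_subsingleton {R : Type} [CommRing R] (X : Type) [AddCommGroup X] [Module R X]
    [Module.Flat R X] (Y : ModuleCat R) (n : ℕ) :
    Subsingleton (((Tor (ModuleCat R) (n+1)).obj (ModuleCat.of R X)).obj Y) := by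
  haveI : Module.Flat R ↑(ModuleCat.of R X) := ‹Module.Flat R X›
  have hz : Limits.IsZero (((Tor (ModuleCat R) (n+1)).obj (ModuleCat.of R X)).obj Y) := ?_
  · exact Equiv.subsingleton
      ((hz.iso (ModuleCat.isZero_of_subsingleton (ModuleCat.of R PUnit))).toLinearEquiv.toEquiv)
  obtain ⟨P⟩ : Nonempty (ProjectiveResolution Y) := ⟨(HasProjectiveResolution.out).some⟩
  refine Limits.IsZero.of_iso ?_
    (P.isoLeftDerivedObj ((MonoidalCategory.tensoringLeft _).obj (ModuleCat.of R X)) (n+1))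
  simp only [HomologicalComplex.homologyFunctor_obj]
  rw [← HomologicalComplex.exactAt_iff_isZero_homology]
  have h := P.complex_exactAt_succ n
  rw [HomologicalComplex.exactAt_iff] at h ⊢
  have heq : ((((MonoidalCategory.tensoringLeft (ModuleCat R)).obj (ModuleCat.of R X)).mapHomologicalComplex
        _).obj P.complex).sc (n+1)
      = (P.complex.sc (n+1)).map (MonoidalCategory.tensorLeft (ModuleCat.of R X)) := rfl
  rw [heq]
  exact Module.Flat.lTensor_shortComplex_exact (ModuleCat.of R X) _ h

lemma aux_free_quot {k A M : Type} [Field k] [CommRing A] [Algebra k A]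
    [IsLocalRing A]
    [AddCommGroup M] [Module A M] [Module k M] [IsScalarTower k A M] [Module.Finite A M]
    (I : Ideal A) [FiniteDimensional k (A ⧸ I)]
    (hdim : finrank k (M ⧸ (I • ⊤ : Submodule A M)) =
      finrank k (A ⧸ I) * finrank k (M ⧸ ((maximalIdeal A) • ⊤ : Submodule A M))) :
    Module.Free (A ⧸ I) (M ⧸ (I • ⊤ : Submodule A M)) := by
  by_cases hI : I = ⊤
  · have hsub : Subsingleton (M ⧸ (I • ⊤ : Submodule A M)) := by
      rw [Submodule.Quotient.subsingleton_iff, hI]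
      simp
    exact Module.Free.of_subsingleton _ _
  · have hI' : I ≤ maximalIdeal A := le_maximalIdeal hI
    haveI : Module.Finite (A ⧸ I) (M ⧸ (I • ⊤ : Submodule A M)) :=
      Module.Finite.of_restrictScalars_finite A _ _
    haveI : Module.Finite k (A ⧸ I) := ‹FiniteDimensional k (A ⧸ I)›
    haveI : Module.Finite k (M ⧸ (I • ⊤ : Submodule A M)) :=
      Module.Finite.trans (A ⧸ I) _
    -- surjection N → V
    let f : (M ⧸ (I • ⊤ : Submodule A M)) →ₗ[A] (M ⧸ ((maximalIdeal A) • ⊤ : Submodule A M)) :=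
      Submodule.mapQ _ _ LinearMap.id
        (by simpa using Submodule.smul_mono hI' (le_refl (⊤ : Submodule A M)))
    have hf : Function.Surjective f := by
      intro x
      obtain ⟨mm, rfl⟩ := Submodule.mkQ_surjective _ x
      exact ⟨Submodule.Quotient.mk mm, rfl⟩
    haveI : FiniteDimensional k (M ⧸ ((maximalIdeal A) • ⊤ : Submodule A M)) :=
      Module.Finite.of_surjective (f.restrictScalars k) hf
    set r := finrank k (M ⧸ ((maximalIdeal A) • ⊤ : Submodule A M)) with hrdef
    let b := finBasis k (M ⧸ ((maximalIdeal A) • ⊤ : Submodule A M))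
    have hmk : ∀ i : Fin r, ∃ x : M,
        Submodule.mkQ ((maximalIdeal A) • ⊤ : Submodule A M) x = b i := fun i =>
      Submodule.mkQ_surjective _ (b i)
    choose m hm using hmk
    have hbtop : Submodule.span A (Set.range ⇑b) = ⊤ := by
      have h1 := Submodule.span_le_restrictScalars k A (Set.range ⇑b)
      rw [b.span_eq] at h1
      exact (Submodule.restrictScalars_eq_top_iff _ _ _).mp (top_le_iff.mp h1)
    have hspA : Submodule.span A (Set.range m) = ⊤ := by
      rw [← IsLocalRing.map_mkQ_eq_top (R := A) (M := M)]
      rw [Submodule.map_span, ← Set.range_comp,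
        show (⇑(Submodule.mkQ ((maximalIdeal A) • ⊤ : Submodule A M)) ∘ m) = ⇑b from
          funext fun i => hm i]
      exact hbtop
    -- the surjection π : (Fin r →₀ A⧸I) → N
    let q := Submodule.mkQ (I • ⊤ : Submodule A M)
    let π : (Fin r →₀ (A ⧸ I)) →ₗ[A ⧸ I] (M ⧸ (I • ⊤ : Submodule A M)) :=
      Finsupp.linearCombination (A ⧸ I) (fun i => q (m i))
    have hqm : Submodule.span A (Set.range fun i => q (m i)) = ⊤ := by
      rw [show (Set.range fun i => q (m i)) = ⇑q '' Set.range m from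
        (Set.range_comp ⇑q m).symm ▸ (Set.range_comp ⇑q m), ← Submodule.map_span, hspA,
        Submodule.map_top, Submodule.range_mkQ]
    have hπrange : LinearMap.range π = ⊤ := by
      rw [Finsupp.range_linearCombination]
      have h2 := Submodule.restrictScalars_span A (A ⧸ I) Ideal.Quotient.mk_surjective
        (Set.range fun i => q (m i))
      rw [hqm] at h2
      exact (Submodule.restrictScalars_eq_top_iff _ _ _).mp h2
    have hπsurj : Function.Surjective π := LinearMap.range_eq_top.mp hπrange
    -- injectivity by dimension count
    haveI : Module.Finite k (Fin r →₀ (A ⧸ I)) := Module.Finite.trans (A ⧸ I) _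
    have hadd := LinearMap.finrank_range_add_finrank_ker (π.restrictScalars k)
    have hrange' : LinearMap.range (π.restrictScalars k) = ⊤ :=
      LinearMap.range_eq_top.mpr hπsurj
    rw [hrange', finrank_top] at hadd
    have hD : finrank k (Fin r →₀ (A ⧸ I)) = finrank k (A ⧸ I) * r := by
      rw [Module.finrank_finsupp, Fintype.card_fin, Nat.mul_comm]
    have hker : finrank k (LinearMap.ker (π.restrictScalars k)) = 0 := by
      rw [hD] at hadd
      rw [hdim] at hadd
      omega
    have hkerbot : LinearMap.ker (π.restrictScalars k) = ⊥ :=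
      Submodule.finrank_eq_zero.mp hker
    have hπinj : Function.Injective π := by
      have := LinearMap.ker_eq_bot.mp hkerbot
      exact this
    exact Module.Free.of_equiv (LinearEquiv.ofBijective π ⟨hπinj, hπsurj⟩)

/-- If `I` is an ideal of finite colength `n = dim_k (A/I)` in the local Noetherian
`k`-algebra `A` with residue field `k`, `M` a finitely generated `A`-module, and
`dim_k (M ⊗_A A/I) = n · dim_k (M ⊗_A k)`, then `Tor₁^{A/I}(M/IM, k) = 0`,
i.e. `M/IM` is a flat `A/I`-module (here `k` is realized over `A/I` as
`(A/I) ⧸ 𝔪(A/I)` with `𝔪(A/I)` the image of the maximal ideal). -/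
theorem truncation_flat_of_dim_eq {k A M : Type} [Field k] [CommRing A] [Algebra k A]
    [IsLocalRing A] [IsNoetherianRing A]
    [AddCommGroup M] [Module A M] [Module k M] [IsScalarTower k A M] [Module.Finite A M]
    (hres : Function.Bijective (algebraMap k (ResidueField A)))
    (I : Ideal A) [FiniteDimensional k (A ⧸ I)]
    (hdim : finrank k (M ⧸ (I • ⊤ : Submodule A M)) =
      finrank k (A ⧸ I) *
        finrank k (M ⧸ ((maximalIdeal A) • ⊤ : Submodule A M))) :
    Subsingleton
        (((Tor (ModuleCat (A ⧸ I)) 1).obj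
            (ModuleCat.of (A ⧸ I) (M ⧸ (I • ⊤ : Submodule A M)))).obj
          (ModuleCat.of (A ⧸ I)
            ((A ⧸ I) ⧸ (maximalIdeal A).map (Ideal.Quotient.mk I)))) ∧
      Module.Flat (A ⧸ I) (M ⧸ (I • ⊤ : Submodule A M)) := by
  haveI := aux_free_quot I hdim
  haveI hflat : Module.Flat (A ⧸ I) (M ⧸ (I • ⊤ : Submodule A M)) := inferInstance
  exact ⟨aux_flat_tor_subsingleton (M ⧸ (I • ⊤ : Submodule A M))
    (ModuleCat.of (A ⧸ I) ((A ⧸ I) ⧸ (maximalIdeal A).map (Ideal.Quotient.mk I))) 0, hflat⟩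
end

section
/- Let A be a local Noetherian k-algebra with maximal ideal 𝔪 and residue field k, and M a finitely generated A-module. If dim_k(M ⊗_A A/𝔪ⁿ) = dim_k(A/𝔪ⁿ) · dim_k(M ⊗_A k) for all n > 0, then for every ideal I ⊂ A of finite colength ℓ one has dim_k(M ⊗_A A/I) = ℓ · dim_k(M ⊗_A k). -/
open IsLocalRing Module

open Submodule Function
section AuxHelpers

section Aux

variable {k A M : Type*} [Field k] [CommRing A] [Algebra k A]
  [AddCommGroup M] [Module A M] [Module k M] [IsScalarTower k A M]

lemma pi_ideal_smul_top (J : Ideal A) (n : ℕ) :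
    (J • ⊤ : Submodule A (Fin n → A)) =
      Submodule.pi Set.univ (fun _ : Fin n => (J : Submodule A A)) := by
  apply le_antisymm
  · rw [Submodule.smul_le]
    intro c hc x _
    intro i _
    exact J.mul_mem_right (x i) hc
  · intro x hx
    have hx' : ∀ i, x i ∈ J := fun i => hx i (Set.mem_univ i)
    have hxe : x = ∑ i, x i • (Pi.single i (1 : A) : Fin n → A) := by
      have : ∀ i : Fin n, x i • (Pi.single i (1 : A) : Fin n → A) = Pi.single i (x i) := by
        intro i
        funext j
        simp only [Pi.smul_apply, Pi.single_apply, smul_eq_mul, mul_ite, mul_one, mul_zero]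
      rw [funext this, Finset.univ_sum_single]
    rw [hxe]
    exact Submodule.sum_mem _ fun i _ => Submodule.smul_mem_smul (hx' i) trivial

lemma finrank_pi_quot (J : Ideal A) (n : ℕ) [FiniteDimensional k (A ⧸ J)] :
    finrank k ((Fin n → A) ⧸ (J • ⊤ : Submodule A (Fin n → A))) = n * finrank k (A ⧸ J) := by
  let e : ((Fin n → A) ⧸ (J • ⊤ : Submodule A (Fin n → A))) ≃ₗ[A] (Fin n → A ⧸ J) :=
    (Submodule.quotEquivOfEq _ _ (pi_ideal_smul_top J n)) ≪≫ₗ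
      Submodule.quotientPi (fun _ : Fin n => (J : Submodule A A))
  rw [(e.restrictScalars k).finrank_eq, Module.finrank_pi_fintype,
    Finset.sum_const, Finset.card_univ, Fintype.card_fin, smul_eq_mul]

lemma fd_pi_quot (J : Ideal A) (n : ℕ) [FiniteDimensional k (A ⧸ J)] :
    FiniteDimensional k ((Fin n → A) ⧸ (J • ⊤ : Submodule A (Fin n → A))) := by
  let e : ((Fin n → A) ⧸ (J • ⊤ : Submodule A (Fin n → A))) ≃ₗ[A] (Fin n → A ⧸ J) :=
    (Submodule.quotEquivOfEq _ _ (pi_ideal_smul_top J n)) ≪≫ₗ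
      Submodule.quotientPi (fun _ : Fin n => (J : Submodule A A))
  exact Module.Finite.equiv (e.restrictScalars k).symm

lemma key {n : ℕ} (φ : (Fin n → A) →ₗ[A] M) (hφ : Function.Surjective φ) (J : Ideal A)
    [FiniteDimensional k (A ⧸ J)] :
    FiniteDimensional k (M ⧸ (J • ⊤ : Submodule A M)) ∧
    (finrank k (M ⧸ (J • ⊤ : Submodule A M)) = n * finrank k (A ⧸ J) ↔
      LinearMap.ker φ ≤ (J • ⊤ : Submodule A (Fin n → A))) := by
  have hmap : Submodule.map φ (J • ⊤ : Submodule A (Fin n → A)) = (J • ⊤ : Submodule A M) := by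
    rw [Submodule.map_smul'', Submodule.map_top, LinearMap.range_eq_top.mpr hφ]
  have h0 : (J • ⊤ : Submodule A (Fin n → A)) ≤
      LinearMap.ker ((J • ⊤ : Submodule A M).mkQ ∘ₗ φ) := by
    intro x hx
    simp only [LinearMap.mem_ker, LinearMap.comp_apply, Submodule.mkQ_apply,
      Submodule.Quotient.mk_eq_zero]
    exact hmap ▸ Submodule.mem_map_of_mem hx
  set ψ : ((Fin n → A) ⧸ (J • ⊤ : Submodule A (Fin n → A))) →ₗ[A]
      (M ⧸ (J • ⊤ : Submodule A M)) :=
    Submodule.liftQ _ ((J • ⊤ : Submodule A M).mkQ ∘ₗ φ) h0 with hψ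
  have hψmk : ∀ x, ψ (Submodule.Quotient.mk x) = Submodule.Quotient.mk (φ x) := fun x =>
    Submodule.liftQ_apply _ _ x
  have hsurj : Function.Surjective ψ := by
    intro y
    obtain ⟨y, rfl⟩ := Submodule.Quotient.mk_surjective _ y
    obtain ⟨x, rfl⟩ := hφ y
    exact ⟨Submodule.Quotient.mk x, hψmk x⟩
  haveI fd1 : FiniteDimensional k ((Fin n → A) ⧸ (J • ⊤ : Submodule A (Fin n → A))) :=
    fd_pi_quot J n
  haveI fd2 : FiniteDimensional k (M ⧸ (J • ⊤ : Submodule A M)) :=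
    Module.Finite.of_surjective (ψ.restrictScalars k) hsurj
  refine ⟨fd2, ?_, ?_⟩
  · -- finrank eq → ker φ ≤ J • ⊤
    intro heq
    have hd : finrank k ((Fin n → A) ⧸ (J • ⊤ : Submodule A (Fin n → A))) =
        finrank k (M ⧸ (J • ⊤ : Submodule A M)) := by
      rw [heq, finrank_pi_quot]
    have hinj : Function.Injective (ψ.restrictScalars k) :=
      (LinearMap.injective_iff_surjective_of_finrank_eq_finrank hd).mpr hsurj
    intro x hx
    have : ψ (Submodule.Quotient.mk x) = 0 := by
      rw [hψmk, LinearMap.mem_ker.mp hx]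
      simp
    have := hinj (a₁ := Submodule.Quotient.mk x) (a₂ := 0) (by simpa using this)
    rwa [Submodule.Quotient.mk_eq_zero] at this
  · -- ker φ ≤ J • ⊤ → finrank eq
    intro hker
    have hinj : Function.Injective ψ := by
      rw [← LinearMap.ker_eq_bot]
      rw [Submodule.ker_liftQ]
      rw [LinearMap.ker_comp, Submodule.ker_mkQ, ← hmap, Submodule.comap_map_eq]
      rw [sup_eq_left.mpr hker]
      exact eq_bot_iff.mpr (Submodule.map_le_iff_le_comap.mpr
        (by rw [Submodule.comap_bot, Submodule.ker_mkQ]))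
    have : finrank k (M ⧸ (J • ⊤ : Submodule A M)) =
        finrank k ((Fin n → A) ⧸ (J • ⊤ : Submodule A (Fin n → A))) :=
      (LinearEquiv.ofBijective (ψ.restrictScalars k) ⟨hinj, hsurj⟩).symm.finrank_eq
    rw [this, finrank_pi_quot]

end Aux

lemma exists_pow_le {k A : Type*} [Field k] [CommRing A] [Algebra k A] [IsLocalRing A]
    (I : Ideal A) (hI : FiniteDimensional k (A ⧸ I)) : ∃ n, maximalIdeal A ^ n ≤ I := by
  haveI : IsArtinian k (A ⧸ I) := inferInstance
  haveI : IsArtinianRing (A ⧸ I) := isArtinian_of_tower k this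
  obtain ⟨n, hn⟩ := IsArtinianRing.isNilpotent_jacobson_bot (R := A ⧸ I)
  refine ⟨n, fun x hx => ?_⟩
  have h1 : (maximalIdeal A).map (Ideal.Quotient.mk I) ≤ Ideal.jacobson ⊥ := by
    rw [Ideal.jacobson]
    refine le_sInf ?_
    rintro J ⟨-, hJ⟩
    rw [Ideal.map_le_iff_le_comap]
    exact (IsLocalRing.eq_maximalIdeal
      (Ideal.comap_isMaximal_of_surjective _ Ideal.Quotient.mk_surjective)).ge
  have h2 : (maximalIdeal A ^ n).map (Ideal.Quotient.mk I) = ⊥ := by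
    rw [Ideal.map_pow]
    have := Ideal.pow_right_mono h1 n
    rw [hn] at this
    exact le_bot_iff.mp this
  have h3 := Ideal.mem_map_of_mem (Ideal.Quotient.mk I) hx
  rw [h2, Ideal.mem_bot] at h3
  exact Ideal.Quotient.eq_zero_iff_mem.mp h3


/-- If the dimension equalities `dim_k (M ⊗_A A/𝔪ⁿ) = dim_k (A/𝔪ⁿ) · dim_k (M ⊗_A k)` hold
for all powers of the maximal ideal, then the analogous equality holds for every ideal of
finite colength. -/
theorem dim_eq_of_dim_eq_maximalIdeal_pow {k A M : Type*} [Field k] [CommRing A] [Algebra k A]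
    [IsLocalRing A] [IsNoetherianRing A]
    [AddCommGroup M] [Module A M] [Module k M] [IsScalarTower k A M] [Module.Finite A M]
    (hres : Function.Bijective (algebraMap k (ResidueField A)))
    (hfd : ∀ n : ℕ, FiniteDimensional k (A ⧸ (maximalIdeal A ^ n)))
    (H : ∀ n : ℕ, 0 < n →
      finrank k (M ⧸ ((maximalIdeal A ^ n) • ⊤ : Submodule A M)) =
        finrank k (A ⧸ (maximalIdeal A ^ n)) *
          finrank k (M ⧸ ((maximalIdeal A) • ⊤ : Submodule A M))) :
    ∀ I : Ideal A, FiniteDimensional k (A ⧸ I) →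
      finrank k (M ⧸ (I • ⊤ : Submodule A M)) =
        finrank k (A ⧸ I) *
          finrank k (M ⧸ ((maximalIdeal A) • ⊤ : Submodule A M)) := by
  intro I hI
  haveI hfd1 : FiniteDimensional k (A ⧸ maximalIdeal A) := by
    have := hfd 1; rwa [pow_one] at this
  -- finite dimensionality of M ⧸ 𝔪M
  obtain ⟨n₀, s, hs⟩ := Module.Finite.exists_fin (R := A) (M := M)
  let φ₀ : (Fin n₀ → A) →ₗ[A] M := Fintype.linearCombination A s
  have hφ₀ : Function.Surjective φ₀ := by
    rw [← LinearMap.range_eq_top, Fintype.range_linearCombination, hs]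
  haveI fdM : FiniteDimensional k (M ⧸ ((maximalIdeal A) • ⊤ : Submodule A M)) :=
    (key φ₀ hφ₀ (maximalIdeal A)).1
  set r := finrank k (M ⧸ ((maximalIdeal A) • ⊤ : Submodule A M)) with hr
  -- choose a basis and lift
  let b := Module.finBasis k (M ⧸ ((maximalIdeal A) • ⊤ : Submodule A M))
  choose m hm using fun i : Fin r =>
    Submodule.Quotient.mk_surjective ((maximalIdeal A) • ⊤ : Submodule A M) (b i)
  have hspan : Submodule.span A (Set.range m) = ⊤ := by
    rw [← IsLocalRing.map_mkQ_eq_top (N := Submodule.span A (Set.range m)),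
      Submodule.map_span]
    have h1 : ((maximalIdeal A) • ⊤ : Submodule A M).mkQ '' (Set.range m) = Set.range b := by
      rw [← Set.range_comp]
      exact congrArg _ (funext fun i => hm i)
    rw [h1, eq_top_iff]
    intro x _
    have hx : x ∈ Submodule.span k (Set.range b) := by rw [b.span_eq]; trivial
    exact Submodule.span_le_restrictScalars k A (Set.range b) hx
  let φ : (Fin r → A) →ₗ[A] M := Fintype.linearCombination A m
  have hφ : Function.Surjective φ := by
    rw [← LinearMap.range_eq_top, Fintype.range_linearCombination, hspan]
  -- kernel of φ is inside 𝔪ⁿ • ⊤ for every n > 0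
  have hker : ∀ n : ℕ, 0 < n →
      LinearMap.ker φ ≤ ((maximalIdeal A ^ n) • ⊤ : Submodule A (Fin r → A)) := by
    intro n hn
    haveI := hfd n
    exact ((key φ hφ (maximalIdeal A ^ n)).2).mp (by rw [H n hn, mul_comm])
  -- now the general ideal
  obtain ⟨n, hn⟩ := exists_pow_le (k := k) I hI
  have hker' : LinearMap.ker φ ≤ (I • ⊤ : Submodule A (Fin r → A)) :=
    le_trans (hker (n + 1) n.succ_pos)
      (Submodule.smul_mono_left (le_trans (Ideal.pow_le_pow_right n.le_succ) hn))
  rw [((key φ hφ I).2).mpr hker', mul_comm]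
end AuxHelpers
end

section
/- Let A be a local Noetherian k-algebra with maximal ideal 𝔪 and residue field k, and M a finitely generated A-module. Then M is free over A if and only if dim_k(M ⊗_A A/𝔪ⁿ) = dim_k(A/𝔪ⁿ) · dim_k(M ⊗_A k) for all n ≥ 1. -/
open IsLocalRing Module Function

noncomputable def piQuotEquiv {A : Type*} [CommRing A] (ι : Type*) [Fintype ι] [DecidableEq ι]
    (I : Ideal A) : ((ι → A) ⧸ (I • ⊤ : Submodule A (ι → A))) ≃ₗ[A] (ι → A ⧸ I) := by
  let g : (ι → A) →ₗ[A] (ι → A ⧸ I) :=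
    LinearMap.pi fun i => (I : Submodule A A).mkQ ∘ₗ LinearMap.proj i
  have hg : Function.Surjective g := by
    intro y
    choose x hx using fun i => Submodule.Quotient.mk_surjective (I : Submodule A A) (y i)
    exact ⟨x, funext hx⟩
  have hker : LinearMap.ker g = (I • ⊤ : Submodule A (ι → A)) := by
    apply le_antisymm
    · intro x hx
      have hx' : ∀ i, x i ∈ I := by
        intro i
        have := congrFun (LinearMap.mem_ker.mp hx) i
        rw [← Submodule.Quotient.mk_eq_zero (I : Submodule A A)]
        simpa [g] using this
      have : x = ∑ i, (x i) • (Pi.single i (1 : A) : ι → A) := by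
        funext j
        simp [Finset.sum_apply, Pi.single_apply, Finset.sum_ite_eq']
      rw [this]
      exact Submodule.sum_mem _ fun i _ =>
        Submodule.smul_mem_smul (hx' i) Submodule.mem_top
    · rw [Submodule.smul_le]
      intro a ha m _
      have : g (a • m) = 0 := by
        funext i
        have h1 : a * m i ∈ I := I.mul_mem_right (m i) ha
        have : Submodule.Quotient.mk (p := (I : Submodule A A)) (a * m i) = 0 :=
          (Submodule.Quotient.mk_eq_zero _).mpr h1
        simpa [g, smul_eq_mul, Algebra.smul_def, Ideal.Quotient.algebraMap_eq] using this
      exact LinearMap.mem_ker.mpr this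
  exact (Submodule.quotEquivOfEq _ _ hker.symm).trans (g.quotKerEquivOfSurjective hg)

lemma finrank_quot_smul_of_equiv {k A M : Type*} [Field k] [CommRing A] [Algebra k A]
    [AddCommGroup M] [Module A M] [Module k M] [IsScalarTower k A M]
    {ι : Type*} [Fintype ι] [DecidableEq ι] (e : M ≃ₗ[A] (ι → A)) (I : Ideal A)
    [FiniteDimensional k (A ⧸ I)] :
    finrank k (M ⧸ (I • ⊤ : Submodule A M)) = Fintype.card ι * finrank k (A ⧸ I) := by
  have e2 : (M ⧸ (I • ⊤ : Submodule A M)) ≃ₗ[A] ((ι → A) ⧸ (I • ⊤ : Submodule A (ι → A))) :=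
    Submodule.Quotient.equiv _ _ e (by
      show Submodule.map e.toLinearMap _ = _
      rw [Submodule.map_smul'', Submodule.map_top, LinearEquiv.range])
  rw [(e2.restrictScalars k).finrank_eq, ((piQuotEquiv ι I).restrictScalars k).finrank_eq]
  simp [Module.finrank_pi_fintype]

/-- Infinitesimal criterion for freeness: a finitely generated module `M` over the local
Noetherian `k`-algebra `A` with residue field `k` is free if and only if
`dim_k (M ⊗_A A/𝔪ⁿ) = dim_k (A/𝔪ⁿ) · dim_k (M ⊗_A k)` for all `n ≥ 1`
(tensor products realized as quotients). -/
theorem free_iff_dim_eq_maximalIdeal_pow {k A M : Type*} [Field k] [CommRing A] [Algebra k A]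
    [IsLocalRing A] [IsNoetherianRing A]
    [AddCommGroup M] [Module A M] [Module k M] [IsScalarTower k A M] [Module.Finite A M]
    (hres : Function.Bijective (algebraMap k (ResidueField A)))
    (hfd : ∀ n : ℕ, FiniteDimensional k (A ⧸ (maximalIdeal A ^ n))) :
    Module.Free A M ↔ ∀ n : ℕ, 1 ≤ n →
      finrank k (M ⧸ ((maximalIdeal A ^ n) • ⊤ : Submodule A M)) =
        finrank k (A ⧸ (maximalIdeal A ^ n)) *
          finrank k (M ⧸ ((maximalIdeal A) • ⊤ : Submodule A M)) := by
  classical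
  haveI hfd1 : FiniteDimensional k (A ⧸ (maximalIdeal A)) := by
    haveI := hfd 1
    exact Module.Finite.equiv
      ((Submodule.quotEquivOfEq _ _ (pow_one (maximalIdeal A))).restrictScalars k)
  have hres1 : finrank k (A ⧸ (maximalIdeal A)) = 1 := by
    let el : k →ₗ[k] (A ⧸ (maximalIdeal A)) :=
      (((maximalIdeal A).mkQ).restrictScalars k) ∘ₗ (Algebra.linearMap k A)
    have hb : Function.Bijective el := hres
    rw [← (LinearEquiv.ofBijective el hb).finrank_eq, finrank_self]
  constructor
  · intro hfree
    intro n hn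
    letI ι := Module.Free.ChooseBasisIndex A M
    let b := Module.Free.chooseBasis A M
    let e : M ≃ₗ[A] (ι → A) := b.equivFun
    haveI := hfd n
    rw [finrank_quot_smul_of_equiv e (maximalIdeal A ^ n),
      finrank_quot_smul_of_equiv e (maximalIdeal A), hres1, mul_one, Nat.mul_comm]
  · intro h
    -- finite dimensionality of the quotients of M
    have hMfd : ∀ n : ℕ,
        FiniteDimensional k (M ⧸ ((maximalIdeal A ^ n) • ⊤ : Submodule A M)) := by
      intro n
      haveI := hfd n
      obtain ⟨t, π, hπ⟩ := Module.Finite.exists_fin' A M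
      haveI : FiniteDimensional k
          ((Fin t → A) ⧸ ((maximalIdeal A ^ n) • ⊤ : Submodule A (Fin t → A))) :=
        Module.Finite.equiv ((piQuotEquiv (Fin t) (maximalIdeal A ^ n)).restrictScalars k).symm
      have hle : ((maximalIdeal A ^ n) • ⊤ : Submodule A (Fin t → A)) ≤
          ((maximalIdeal A ^ n) • ⊤ : Submodule A M).comap π := by
        rw [← Submodule.map_le_iff_le_comap, Submodule.map_smul'']
        exact smul_mono_right _ le_top
      refine Module.Finite.of_surjective ((Submodule.mapQ _ _ π hle).restrictScalars k) ?_
      intro y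
      obtain ⟨x, rfl⟩ := Submodule.Quotient.mk_surjective _ y
      obtain ⟨z, rfl⟩ := hπ x
      exact ⟨Submodule.Quotient.mk z, by simp [Submodule.mapQ_apply]⟩
    haveI hMfd1 : FiniteDimensional k (M ⧸ ((maximalIdeal A) • ⊤ : Submodule A M)) := by
      haveI := hMfd 1
      exact Module.Finite.equiv
        ((Submodule.quotEquivOfEq ((maximalIdeal A ^ 1) • ⊤ : Submodule A M)
          ((maximalIdeal A) • ⊤) (by rw [pow_one])).restrictScalars k)
    set r := finrank k (M ⧸ ((maximalIdeal A) • ⊤ : Submodule A M)) with hr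
    let b : Basis (Fin r) k (M ⧸ ((maximalIdeal A) • ⊤ : Submodule A M)) :=
      Module.finBasis k _
    choose m hm using fun i =>
      Submodule.Quotient.mk_surjective ((maximalIdeal A) • ⊤ : Submodule A M) (b i)
    let f : (Fin r → A) →ₗ[A] M := Fintype.linearCombination A m
    have hrange : LinearMap.range f = Submodule.span A (Set.range m) :=
      Fintype.range_linearCombination A m
    have hspan : Submodule.span A (Set.range m) = ⊤ := by
      rw [← IsLocalRing.map_mkQ_eq_top (R := A), Submodule.map_span]
      have him : ((maximalIdeal A • ⊤ : Submodule A M).mkQ) '' Set.range m = Set.range ⇑b := by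
        rw [← Set.range_comp]
        exact congrArg _ (funext hm)
      rw [him, eq_top_iff]
      intro x _
      have hx : x ∈ Submodule.span k (Set.range ⇑b) := by rw [b.span_eq]; trivial
      exact Submodule.span_le_restrictScalars k A _ hx
    have hf : Function.Surjective f := by
      rw [← LinearMap.range_eq_top, hrange, hspan]
    have hker : ∀ n : ℕ,
        LinearMap.ker f ≤ ((maximalIdeal A ^ n) • ⊤ : Submodule A (Fin r → A)) := by
      intro n
      rcases Nat.eq_zero_or_pos n with rfl | hn
      · intro x _
        rw [pow_zero, Ideal.one_eq_top, Submodule.top_smul]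
        trivial
      · haveI := hfd n
        haveI := hMfd n
        haveI : FiniteDimensional k
            ((Fin r → A) ⧸ ((maximalIdeal A ^ n) • ⊤ : Submodule A (Fin r → A))) :=
          Module.Finite.equiv ((piQuotEquiv (Fin r) (maximalIdeal A ^ n)).restrictScalars k).symm
        have hle : ((maximalIdeal A ^ n) • ⊤ : Submodule A (Fin r → A)) ≤
            ((maximalIdeal A ^ n) • ⊤ : Submodule A M).comap f := by
          rw [← Submodule.map_le_iff_le_comap, Submodule.map_smul'']
          exact smul_mono_right _ le_top
        let fn := Submodule.mapQ _ _ f hle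
        have hsurj : Function.Surjective fn := by
          intro y
          obtain ⟨x, rfl⟩ := Submodule.Quotient.mk_surjective _ y
          obtain ⟨z, rfl⟩ := hf x
          exact ⟨Submodule.Quotient.mk z, by simp [fn, Submodule.mapQ_apply]⟩
        have hdim : finrank k ((Fin r → A) ⧸ ((maximalIdeal A ^ n) • ⊤ : Submodule A (Fin r → A)))
            = finrank k (M ⧸ ((maximalIdeal A ^ n) • ⊤ : Submodule A M)) := by
          rw [finrank_quot_smul_of_equiv (LinearEquiv.refl A (Fin r → A)) (maximalIdeal A ^ n),
            h n hn, Fintype.card_fin, Nat.mul_comm]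
        have hinj : Function.Injective fn := by
          have := (LinearMap.injective_iff_surjective_of_finrank_eq_finrank
            (f := fn.restrictScalars k) hdim).mpr hsurj
          exact this
        intro x hx
        have h0 : fn (Submodule.Quotient.mk x) = 0 := by
          simp only [fn, Submodule.mapQ_apply]
          rw [LinearMap.mem_ker.mp hx]
          simp
        have := hinj (by rw [h0, map_zero] : fn (Submodule.Quotient.mk x) = fn 0)
        exact (Submodule.Quotient.mk_eq_zero _).mp this
    have hkerbot : LinearMap.ker f = ⊥ := by
      rw [← le_bot_iff, ← Ideal.iInf_pow_smul_eq_bot_of_isLocalRing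
        (M := Fin r → A) (I := maximalIdeal A) (maximalIdeal.isMaximal A).ne_top]
      exact le_iInf hker
    exact Module.Free.of_equiv (LinearEquiv.ofBijective f ⟨LinearMap.ker_eq_bot.mp hkerbot, hf⟩)
end
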